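/- Domination lemma for measures of nested stable sets (Lemma 29 of the paper): Let (A_i)_{i∈ℕ} and (B_i)_{i∈ℕ} be sequences of members of 𝒮 with A_i ⊆ B_i for every i. If the series Σ_{i∈ℕ} μ(B_i) is convergent, then the series Σ_{i∈ℕ} μ(A_i) is convergent. -/

import Mathlib

open Filter Topology

/-- A series `Σ_{i∈ℕ} x i` converges to `s` if its partial sums `Σ_{i=0}^{N} x i`
converge to `s` as `N → ∞`. -/
def SeriesConvTo {G : Type*} [AddCommMonoid G] [TopologicalSpace G]
    (x : ℕ → G) (s : G) : Prop :=
  Tendsto (fun N => ∑ i ∈ Finset.range (N + 1), x i) atTop (𝓝 s)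

/-- Domination lemma: if `A i ⊆ B i` are stable sets for every `i` and the series
`Σ_i μ (B i)` converges, then the series `Σ_i μ (A i)` converges. -/
theorem series_of_measures_of_nested_stable_sets {G : Type*} [AddCommGroup G]
    [UniformSpace G] [IsUniformAddGroup G] [CompleteSpace G] [T2Space G]
    [PartialOrder G] {X : Type*}
    (hadd : ∀ a b c : G, a ≤ b → a + c ≤ b + c)
    (hclosed : ∀ (u v : ℕ → G) (lu lv : G), (∀ n, u n ≤ v n) →
      Tendsto u atTop (𝓝 lu) → Tendsto v atTop (𝓝 lv) → lu ≤ lv)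
    (hsqueeze : ∀ (u v w : ℕ → G), (∀ n, u n ≤ v n) → (∀ n, v n ≤ w n) →
      Tendsto u atTop (𝓝 (0 : G)) → Tendsto w atTop (𝓝 (0 : G)) →
      Tendsto v atTop (𝓝 (0 : G)))
    (S : Set (Set X)) (μ : Set X → G)
    (hempty : ∅ ∈ S)
    (hunion : ∀ A B : Set X, A ∈ S → B ∈ S → A ∪ B ∈ S)
    (hinter : ∀ A B : Set X, A ∈ S → B ∈ S → A ∩ B ∈ S)
    (hdiff : ∀ A B : Set X, A ∈ S → B ∈ S → A \ B ∈ S)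
    (hsubcover : ∀ A : Set X, A ∈ S → ∀ C : ℕ → Set X, (∀ i, C i ∈ S) →
      A ⊆ ⋃ i, C i → ∃ F : Finset ℕ, A ⊆ ⋃ i ∈ F, C i)
    (hμadd : ∀ A B : Set X, A ∈ S → B ∈ S → Disjoint A B → μ (A ∪ B) = μ A + μ B)
    (hμpos : ∀ A : Set X, A ∈ S → 0 ≤ μ A)
    (A B : ℕ → Set X) (hA : ∀ i, A i ∈ S) (hB : ∀ i, B i ∈ S)
    (hAB : ∀ i, A i ⊆ B i)
    (sB : G) (hsB : SeriesConvTo (fun i => μ (B i)) sB) :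
    ∃ sA : G, SeriesConvTo (fun i => μ (A i)) sA := by

  classical
  -- basic order facts derived from hadd
  have key1 : ∀ a b : G, 0 ≤ a → b ≤ a + b := by
    intro a b h
    have := hadd 0 a b h
    simpa [add_comm] using this
  have negle : ∀ a b : G, a ≤ b → -b ≤ -a := by
    intro a b h
    have := hadd a b (-a + -b) h
    calc -b = a + (-a + -b) := by abel
    _ ≤ b + (-a + -b) := this
    _ = -a := by abel
  -- μ is monotone on the nested pairs
  have hle : ∀ i, μ (A i) ≤ μ (B i) := by
    intro i
    have hd : Disjoint (A i) (B i \ A i) := Set.disjoint_sdiff_right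
    have hu : A i ∪ (B i \ A i) = B i := Set.union_diff_cancel (hAB i)
    have := hμadd (A i) (B i \ A i) (hA i) (hdiff _ _ (hB i) (hA i)) hd
    rw [hu] at this
    rw [this, add_comm]
    exact key1 _ _ (hμpos _ (hdiff _ _ (hB i) (hA i)))
  -- sums of nonneg terms are nonneg; sums are monotone
  have sum_nonneg : ∀ (s : Finset ℕ) (f : ℕ → G), (∀ i ∈ s, 0 ≤ f i) →
      0 ≤ ∑ i ∈ s, f i := by
    intro s
    induction s using Finset.cons_induction with
    | empty => intro f _; simp
    | cons i s hi ih =>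
      intro f hf
      rw [Finset.sum_cons]
      have h1 : (0:G) ≤ ∑ j ∈ s, f j := ih f (fun j hj => hf j (Finset.mem_cons_of_mem hj))
      exact le_trans h1 (key1 _ _ (hf i (Finset.mem_cons_self i s)))
  have sum_mono : ∀ (s : Finset ℕ) (f g : ℕ → G), (∀ i ∈ s, f i ≤ g i) →
      ∑ i ∈ s, f i ≤ ∑ i ∈ s, g i := by
    intro s
    induction s using Finset.cons_induction with
    | empty => intro f g _; simp
    | cons i s hi ih =>
      intro f g hfg
      rw [Finset.sum_cons, Finset.sum_cons]
      have h1 : f i + ∑ j ∈ s, f j ≤ g i + ∑ j ∈ s, f j :=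
        hadd _ _ _ (hfg i (Finset.mem_cons_self i s))
      have h2 : g i + ∑ j ∈ s, f j ≤ g i + ∑ j ∈ s, g j := by
        rw [add_comm (g i), add_comm (g i)]
        exact hadd _ _ _ (ih f g (fun j hj => hfg j (Finset.mem_cons_of_mem hj)))
      exact le_trans h1 h2
  set a : ℕ → G := fun N => ∑ i ∈ Finset.range (N + 1), μ (A i) with ha
  set b : ℕ → G := fun N => ∑ i ∈ Finset.range (N + 1), μ (B i) with hb
  -- difference bounds for partial sums
  have hdiffb : ∀ p q : ℕ, p ≤ q → 0 ≤ a q - a p ∧ a q - a p ≤ b q - b p := by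
    intro p q hpq
    have hpq' : p + 1 ≤ q + 1 := Nat.succ_le_succ hpq
    have ea : a q - a p = ∑ i ∈ Finset.Ico (p+1) (q+1), μ (A i) :=
      (Finset.sum_Ico_eq_sub _ hpq').symm
    have eb : b q - b p = ∑ i ∈ Finset.Ico (p+1) (q+1), μ (B i) :=
      (Finset.sum_Ico_eq_sub _ hpq').symm
    constructor
    · rw [ea]; exact sum_nonneg _ _ (fun i _ => hμpos _ (hA i))
    · rw [ea, eb]; exact sum_mono _ _ _ (fun i _ => hle i)
  -- it suffices to show the partial sums are Cauchy
  suffices h : CauchySeq a by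
    obtain ⟨sA, hsA⟩ := cauchySeq_tendsto_of_complete h
    exact ⟨sA, hsA⟩
  by_contra hc
  rw [cauchySeq_iff] at hc
  push_neg at hc
  obtain ⟨V, hV, hVfail⟩ := hc
  rw [uniformity_eq_comap_nhds_zero G] at hV
  obtain ⟨W, hW, hWV⟩ := Filter.mem_comap.mp hV
  choose k hk l hl hout using hVfail
  have hnot : ∀ N, a (l N) - a (k N) ∉ W := by
    intro N hmem
    exact hout N (hWV hmem)
  set p : ℕ → ℕ := fun N => min (k N) (l N) with hp
  set q : ℕ → ℕ := fun N => max (k N) (l N) with hq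
  set c : ℕ → G := fun N => b (q N) - b (p N) with hcdef
  have hbound : ∀ N, -(c N) ≤ a (l N) - a (k N) ∧ a (l N) - a (k N) ≤ c N := by
    intro N
    rcases le_total (k N) (l N) with h | h
    · have hpq : p N = k N ∧ q N = l N := ⟨min_eq_left h, max_eq_right h⟩
      have hd := hdiffb (k N) (l N) h
      constructor
      · have h1 : -(c N) ≤ 0 := by
          have : (0:G) ≤ c N := by
            simp only [hcdef, hpq.1, hpq.2]
            exact (hdiffb _ _ h).1.trans (hdiffb _ _ h).2
          have := negle 0 (c N) this
          simpa using this
        exact h1.trans hd.1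
      · simp only [hcdef, hpq.1, hpq.2]; exact hd.2
    · have hpq : p N = l N ∧ q N = k N := ⟨min_eq_right h, max_eq_left h⟩
      have hd := hdiffb (l N) (k N) h
      have hrw : a (l N) - a (k N) = -(a (k N) - a (l N)) := by abel
      constructor
      · rw [hrw]
        simp only [hcdef, hpq.1, hpq.2]
        exact negle _ _ hd.2
      · rw [hrw]
        have h1 : -(a (k N) - a (l N)) ≤ 0 := by
          have := negle 0 _ hd.1
          simpa using this
        have h2 : (0:G) ≤ c N := by
          simp only [hcdef, hpq.1, hpq.2]
          exact hd.1.trans hd.2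
        exact h1.trans h2
  -- c tends to 0
  have hql : Tendsto q atTop atTop :=
    tendsto_atTop_mono (fun N => (hk N).trans (le_max_left _ _)) tendsto_id
  have hpl : Tendsto p atTop atTop :=
    tendsto_atTop_mono (fun N => le_min (hk N) (hl N)) tendsto_id
  have hbq : Tendsto (fun N => b (q N)) atTop (𝓝 sB) := hsB.comp hql
  have hbp : Tendsto (fun N => b (p N)) atTop (𝓝 sB) := hsB.comp hpl
  have hc0 : Tendsto c atTop (𝓝 0) := by
    have := hbq.sub hbp
    rwa [sub_self] at this
  have hnc0 : Tendsto (fun N => -(c N)) atTop (𝓝 0) := by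
    have := hc0.neg
    rwa [neg_zero] at this
  have hv0 : Tendsto (fun N => a (l N) - a (k N)) atTop (𝓝 0) :=
    hsqueeze _ _ _ (fun N => (hbound N).1) (fun N => (hbound N).2) hnc0 hc0
  have hev : ∀ᶠ N in atTop, a (l N) - a (k N) ∈ W := hv0 hW
  obtain ⟨N, hN⟩ := hev.exists
  exact hnot N hN
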